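/- Let H₁, H₂ be nonzero complex Hilbert spaces and let T ∈ B(H₂, H₁) with ‖T‖ ≤ 1. The Hilbert T₂-module H₁ ⊕ H₂ given by π_{(H₁,H₂,T)} is sub-tracing if and only if the range T(H₂) is not dense in H₁. -/

import Mathlib

set_option synthInstance.maxHeartbeats 1000000
set_option maxHeartbeats 2000000

noncomputable section

open Filter

open scoped ENNReal Matrix.Norms.L2Operator

variable (A : Type) [NonUnitalNormedRing A] [NormedSpace ℂ A]

/-- A Hilbert `A`-module structure on the Hilbert space `K`: a contractive algebra
homomorphism `π : A → B(K)` which is nondegenerate, i.e. the linear span of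
`{π a x : a ∈ A, x ∈ K}` is dense in `K`. -/
def IsHilbertRep {K : Type} [NormedAddCommGroup K] [InnerProductSpace ℂ K] [CompleteSpace K]
    (π : A →ₙₐ[ℂ] (K →L[ℂ] K)) : Prop :=
  (∀ a : A, ‖π a‖ ≤ ‖a‖) ∧
  Dense ((Submodule.span ℂ {x : K | ∃ (a : A) (y : K), π a y = x} : Submodule ℂ K) : Set K)

/-- A bounded `A`-module map between Hilbert `A`-modules. -/
def IsModuleMap {K L : Type} [NormedAddCommGroup K] [InnerProductSpace ℂ K]
    [NormedAddCommGroup L] [InnerProductSpace ℂ L]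
    (πK : A →ₙₐ[ℂ] (K →L[ℂ] K)) (πL : A →ₙₐ[ℂ] (L →L[ℂ] L)) (T : K →L[ℂ] L) : Prop :=
  ∀ (a : A) (x : K), T (πK a x) = πL a (T x)

/-- `H` is sub-tracing: for every closed `A`-invariant subspace `E` of `H` (a Hilbert
`A`-module under the restricted action), every Hilbert `A`-module `L`, and every nonzero
bounded `A`-module map `R : E → L`, there exists a bounded `A`-module map `V : H → E`
with `R ∘ V ≠ 0`. -/
def IsSubTracing {H : Type} [NormedAddCommGroup H] [InnerProductSpace ℂ H] [CompleteSpace H]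
    (πH : A →ₙₐ[ℂ] (H →L[ℂ] H)) : Prop :=
  ∀ (E : Submodule ℂ H), IsClosed (E : Set H) →
    ∀ (hinv : ∀ (a : A), ∀ x ∈ E, πH a x ∈ E),
    ∀ (L : Type) [NormedAddCommGroup L] [InnerProductSpace ℂ L] [CompleteSpace L],
    ∀ (πL : A →ₙₐ[ℂ] (L →L[ℂ] L)), IsHilbertRep A πL →
    ∀ R : ↥E →L[ℂ] L,
      (∀ (a : A) (x : ↥E), R ⟨πH a ↑x, hinv a ↑x x.2⟩ = πL a (R x)) → R ≠ 0 →
      ∃ V : H →L[ℂ] ↥E,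
        (∀ (a : A) (x : H), (↑(V (πH a x)) : H) = πH a ↑(V x)) ∧ R.comp V ≠ 0

/-- The algebra of upper triangular `2 × 2` complex matrices, normed as operators
on the Euclidean space `ℂ²` (the `L²` operator norm). -/
def T2 : Subalgebra ℂ (Matrix (Fin 2) (Fin 2) ℂ) where
  carrier := {M | M 1 0 = 0}
  mul_mem' := by
    intro a b ha hb
    simp only [Set.mem_setOf_eq] at *
    simp [Matrix.mul_apply, Fin.sum_univ_two, ha, hb]
  add_mem' := by
    intro a b ha hb
    simp only [Set.mem_setOf_eq] at *
    simp [ha, hb]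
  algebraMap_mem' := by
    intro c
    simp [Matrix.algebraMap_eq_diagonal]

/-- The operator `(ζ, η) ↦ (a • ζ + b • (T η), c • η)` on `H₁ × H₂`. -/
def blockOp {H₁ H₂ : Type} [NormedAddCommGroup H₁] [InnerProductSpace ℂ H₁]
    [NormedAddCommGroup H₂] [InnerProductSpace ℂ H₂]
    (T : H₂ →L[ℂ] H₁) (a b c : ℂ) : (H₁ × H₂) →L[ℂ] (H₁ × H₂) :=
  (a • ContinuousLinearMap.fst ℂ H₁ H₂ +
    b • T.comp (ContinuousLinearMap.snd ℂ H₁ H₂)).prod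
    (c • ContinuousLinearMap.snd ℂ H₁ H₂)

variable {H₁ H₂ : Type} [NormedAddCommGroup H₁] [InnerProductSpace ℂ H₁]
  [NormedAddCommGroup H₂] [InnerProductSpace ℂ H₂]

theorem blockOp_apply (T : H₂ →L[ℂ] H₁) (a b c : ℂ) (x : H₁ × H₂) :
    blockOp T a b c x = (a • x.1 + b • T x.2, c • x.2) := rfl

theorem blockOp_mul (T : H₂ →L[ℂ] H₁) (a b c a' b' c' : ℂ) :
    (blockOp T a b c).comp (blockOp T a' b' c') =
      blockOp T (a * a') (a * b' + b * c') (c * c') := by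
  refine ContinuousLinearMap.ext fun x => Prod.ext ?_ ?_
  · simp [blockOp_apply, smul_smul, smul_add, add_smul]
    abel
  · simp [blockOp_apply, smul_smul]

theorem blockOp_add (T : H₂ →L[ℂ] H₁) (a b c a' b' c' : ℂ) :
    blockOp T (a + a') (b + b') (c + c') = blockOp T a b c + blockOp T a' b' c' := by
  refine ContinuousLinearMap.ext fun x => Prod.ext ?_ ?_
  · simp [blockOp_apply, add_smul]
    abel
  · simp [blockOp_apply, add_smul]

theorem blockOp_smul (T : H₂ →L[ℂ] H₁) (s a b c : ℂ) :
    blockOp T (s * a) (s * b) (s * c) = s • blockOp T a b c := by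
  refine ContinuousLinearMap.ext fun x => Prod.ext ?_ ?_
  · simp [blockOp_apply, smul_smul, smul_add]
  · simp [blockOp_apply, smul_smul]

theorem blockOp_zero (T : H₂ →L[ℂ] H₁) : blockOp T 0 0 0 = 0 := by
  refine ContinuousLinearMap.ext fun x => Prod.ext ?_ ?_ <;> simp [blockOp_apply]

/-- Conjugation of an operator on `H₁ × H₂` to the `L²`-direct sum `WithLp 2 (H₁ × H₂)`. -/
def prodL2Conj (X : (H₁ × H₂) →L[ℂ] (H₁ × H₂)) :
    WithLp 2 (H₁ × H₂) →L[ℂ] WithLp 2 (H₁ × H₂) :=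
  ((WithLp.prodContinuousLinearEquiv 2 ℂ H₁ H₂).symm.toContinuousLinearMap.comp X).comp
    (WithLp.prodContinuousLinearEquiv 2 ℂ H₁ H₂).toContinuousLinearMap

theorem prodL2Conj_add (X Y : (H₁ × H₂) →L[ℂ] (H₁ × H₂)) :
    prodL2Conj (X + Y) = prodL2Conj X + prodL2Conj Y := by
  unfold prodL2Conj
  rw [ContinuousLinearMap.comp_add, ContinuousLinearMap.add_comp]

theorem prodL2Conj_smul (s : ℂ) (X : (H₁ × H₂) →L[ℂ] (H₁ × H₂)) :
    prodL2Conj (s • X) = s • prodL2Conj X := by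
  unfold prodL2Conj
  rw [ContinuousLinearMap.comp_smul, ContinuousLinearMap.smul_comp]

theorem prodL2Conj_zero : prodL2Conj (0 : (H₁ × H₂) →L[ℂ] (H₁ × H₂)) = 0 := by
  unfold prodL2Conj
  rw [ContinuousLinearMap.comp_zero, ContinuousLinearMap.zero_comp]

theorem prodL2Conj_mul (X Y : (H₁ × H₂) →L[ℂ] (H₁ × H₂)) :
    prodL2Conj X * prodL2Conj Y = prodL2Conj (X.comp Y) := by
  ext x <;> simp [prodL2Conj, ContinuousLinearMap.mul_apply]

/-- The representation `π_{(H₁,H₂,T)}` of `T2` on the Hilbert space direct sum `H₁ ⊕ H₂`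
determined by a contraction `T : H₂ → H₁`: the upper triangular matrix `[[a, b], [0, c]]`
acts by `(ζ, η) ↦ (a ζ + b (T η), c η)`. -/
def triRep (T : H₂ →L[ℂ] H₁) :
    ↥T2 →ₙₐ[ℂ] (WithLp 2 (H₁ × H₂) →L[ℂ] WithLp 2 (H₁ × H₂)) where
  toFun M := prodL2Conj (blockOp T ((M : Matrix (Fin 2) (Fin 2) ℂ) 0 0)
    ((M : Matrix (Fin 2) (Fin 2) ℂ) 0 1) ((M : Matrix (Fin 2) (Fin 2) ℂ) 1 1))
  map_add' M N := by
    have h : ((M + N : ↥T2) : Matrix (Fin 2) (Fin 2) ℂ)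
        = (M : Matrix (Fin 2) (Fin 2) ℂ) + (N : Matrix (Fin 2) (Fin 2) ℂ) := rfl
    simp only [h, Matrix.add_apply, blockOp_add, prodL2Conj_add]
  map_smul' s M := by
    have h : ((s • M : ↥T2) : Matrix (Fin 2) (Fin 2) ℂ)
        = s • (M : Matrix (Fin 2) (Fin 2) ℂ) := rfl
    simp only [h, Matrix.smul_apply, smul_eq_mul, blockOp_smul, prodL2Conj_smul,
      RingHom.id_apply, MonoidHom.id_apply]
  map_zero' := by
    have h : ((0 : ↥T2) : Matrix (Fin 2) (Fin 2) ℂ) = 0 := rfl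
    simp only [h, Matrix.zero_apply, blockOp_zero, prodL2Conj_zero]
  map_mul' M N := by
    have hM : (M : Matrix (Fin 2) (Fin 2) ℂ) 1 0 = 0 := M.2
    have hN : (N : Matrix (Fin 2) (Fin 2) ℂ) 1 0 = 0 := N.2
    have hMN : ((M * N : ↥T2) : Matrix (Fin 2) (Fin 2) ℂ)
        = (M : Matrix (Fin 2) (Fin 2) ℂ) * (N : Matrix (Fin 2) (Fin 2) ℂ) := rfl
    have e00 : ((M * N : ↥T2) : Matrix (Fin 2) (Fin 2) ℂ) 0 0
        = (M : Matrix (Fin 2) (Fin 2) ℂ) 0 0 * (N : Matrix (Fin 2) (Fin 2) ℂ) 0 0 := by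
      simp [hMN, Matrix.mul_apply, Fin.sum_univ_two, hN]
    have e01 : ((M * N : ↥T2) : Matrix (Fin 2) (Fin 2) ℂ) 0 1
        = (M : Matrix (Fin 2) (Fin 2) ℂ) 0 0 * (N : Matrix (Fin 2) (Fin 2) ℂ) 0 1
          + (M : Matrix (Fin 2) (Fin 2) ℂ) 0 1 * (N : Matrix (Fin 2) (Fin 2) ℂ) 1 1 := by
      simp [hMN, Matrix.mul_apply, Fin.sum_univ_two]
    have e11 : ((M * N : ↥T2) : Matrix (Fin 2) (Fin 2) ℂ) 1 1
        = (M : Matrix (Fin 2) (Fin 2) ℂ) 1 1 * (N : Matrix (Fin 2) (Fin 2) ℂ) 1 1 := by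
      simp [hMN, Matrix.mul_apply, Fin.sum_univ_two, hM]
    simp only [e00, e01, e11, ← blockOp_mul, ← prodL2Conj_mul]
open scoped ComplexInnerProductSpace
section Test
variable {H₁ H₂ : Type} [NormedAddCommGroup H₁] [InnerProductSpace ℂ H₁]
  [NormedAddCommGroup H₂] [InnerProductSpace ℂ H₂]

def mk2 (a : H₁) (b : H₂) : WithLp 2 (H₁ × H₂) := (WithLp.equiv 2 (H₁ × H₂)).symm (a, b)

def pj1 (x : WithLp 2 (H₁ × H₂)) : H₁ := ((WithLp.equiv 2 (H₁ × H₂)) x).1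
def pj2 (x : WithLp 2 (H₁ × H₂)) : H₂ := ((WithLp.equiv 2 (H₁ × H₂)) x).2

theorem mk2_pj (x : WithLp 2 (H₁ × H₂)) : mk2 (pj1 x) (pj2 x) = x := rfl
theorem pj1_mk2 (a : H₁) (b : H₂) : pj1 (mk2 a b) = a := rfl
theorem pj2_mk2 (a : H₁) (b : H₂) : pj2 (mk2 a b) = b := rfl
theorem mk2_add (a a' : H₁) (b b' : H₂) : mk2 a b + mk2 a' b' = mk2 (a+a') (b+b') := rfl
theorem mk2_smul (c : ℂ) (a : H₁) (b : H₂) : c • mk2 a b = mk2 (c•a) (c•b) := rfl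

theorem triRep_mk2 (T : H₂ →L[ℂ] H₁) (M : ↥T2) (a : H₁) (b : H₂) :
    triRep T M (mk2 a b) = mk2 ((M : Matrix (Fin 2) (Fin 2) ℂ) 0 0 • a
      + (M : Matrix (Fin 2) (Fin 2) ℂ) 0 1 • T b)
      ((M : Matrix (Fin 2) (Fin 2) ℂ) 1 1 • b) := rfl

def m11 : ↥T2 := ⟨!![1,0;0,0], by show (!![1,0;0,0] : Matrix (Fin 2) (Fin 2) ℂ) 1 0 = 0; simp⟩
def m12 : ↥T2 := ⟨!![0,1;0,0], by show (!![0,1;0,0] : Matrix (Fin 2) (Fin 2) ℂ) 1 0 = 0; simp⟩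
def m22 : ↥T2 := ⟨!![0,0;0,1], by show (!![0,0;0,1] : Matrix (Fin 2) (Fin 2) ℂ) 1 0 = 0; simp⟩

theorem triRep_m11 (T : H₂ →L[ℂ] H₁) (a : H₁) (b : H₂) :
    triRep T m11 (mk2 a b) = mk2 a 0 := by
  rw [triRep_mk2]
  norm_num [m11]

theorem triRep_m12 (T : H₂ →L[ℂ] H₁) (a : H₁) (b : H₂) :
    triRep T m12 (mk2 a b) = mk2 (T b) 0 := by
  rw [triRep_mk2]
  norm_num [m12]

theorem triRep_m22 (T : H₂ →L[ℂ] H₁) (a : H₁) (b : H₂) :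
    triRep T m22 (mk2 a b) = mk2 0 b := by
  rw [triRep_mk2]
  norm_num [m22]

theorem entry_norm_le (M : Matrix (Fin 2) (Fin 2) ℂ) (i j : Fin 2) : ‖M i j‖ ≤ ‖M‖ := by
  have h := M.l2_opNorm_mulVec (EuclideanSpace.single j 1)
  rw [EuclideanSpace.norm_single, norm_one, mul_one] at h
  set y : EuclideanSpace ℂ (Fin 2) := (EuclideanSpace.equiv (Fin 2) ℂ).symm
    (Matrix.mulVec M (EuclideanSpace.single j 1)) with hy
  have hyi : y i = M i j := by
    simp [hy, Matrix.mulVec, dotProduct, Fin.sum_univ_two,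
      EuclideanSpace.single_apply]
  have h2 : ‖y i‖ ≤ ‖y‖ := by
    have := @norm_inner_le_norm ℂ _ _ _ _ (EuclideanSpace.single i (1:ℂ)) y
    rw [EuclideanSpace.norm_single, norm_one, one_mul] at this
    simpa [EuclideanSpace.inner_single_left] using this
  rw [hyi] at h2
  exact h2.trans h
end Test
section Test2
variable {H₁ H₂ : Type} [NormedAddCommGroup H₁] [InnerProductSpace ℂ H₁]
  [NormedAddCommGroup H₂] [InnerProductSpace ℂ H₂]

theorem T2_coe_norm (a : ↥T2) : ‖a‖ = ‖(a : Matrix (Fin 2) (Fin 2) ℂ)‖ := rfl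

theorem T2_one_coe : ((1 : ↥T2) : Matrix (Fin 2) (Fin 2) ℂ) = 1 := rfl

/-- The representation of `T2` on any space by the `(0,0)` entry. -/
def scalRep (K : Type) [NormedAddCommGroup K] [InnerProductSpace ℂ K] :
    ↥T2 →ₙₐ[ℂ] (K →L[ℂ] K) where
  toFun M := ((M : Matrix (Fin 2) (Fin 2) ℂ) 0 0) • (1 : K →L[ℂ] K)
  map_add' M N := by
    have h : ((M + N : ↥T2) : Matrix (Fin 2) (Fin 2) ℂ)
        = (M : Matrix (Fin 2) (Fin 2) ℂ) + (N : Matrix (Fin 2) (Fin 2) ℂ) := rfl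
    simp [h, add_smul]
  map_smul' s M := by
    have h : ((s • M : ↥T2) : Matrix (Fin 2) (Fin 2) ℂ)
        = s • (M : Matrix (Fin 2) (Fin 2) ℂ) := rfl
    simp [h, smul_smul]
  map_zero' := by
    have h : ((0 : ↥T2) : Matrix (Fin 2) (Fin 2) ℂ) = 0 := rfl
    simp [h]
  map_mul' M N := by
    have hN : (N : Matrix (Fin 2) (Fin 2) ℂ) 1 0 = 0 := N.2
    have hMN : ((M * N : ↥T2) : Matrix (Fin 2) (Fin 2) ℂ)
        = (M : Matrix (Fin 2) (Fin 2) ℂ) * (N : Matrix (Fin 2) (Fin 2) ℂ) := rfl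
    have e00 : ((M * N : ↥T2) : Matrix (Fin 2) (Fin 2) ℂ) 0 0
        = (M : Matrix (Fin 2) (Fin 2) ℂ) 0 0 * (N : Matrix (Fin 2) (Fin 2) ℂ) 0 0 := by
      simp [hMN, Matrix.mul_apply, Fin.sum_univ_two, hN]
    simp [e00, smul_smul, mul_comm]

theorem scalRep_apply (K : Type) [NormedAddCommGroup K] [InnerProductSpace ℂ K]
    (M : ↥T2) (x : K) : scalRep K M x = ((M : Matrix (Fin 2) (Fin 2) ℂ) 0 0) • x := rfl

theorem entry_norm_le' (M : Matrix (Fin 2) (Fin 2) ℂ) (i j : Fin 2) : ‖M i j‖ ≤ ‖M‖ := entry_norm_le M i j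

theorem scalRep_isHilbertRep (K : Type) [NormedAddCommGroup K] [InnerProductSpace ℂ K]
    [CompleteSpace K] : IsHilbertRep ↥T2 (scalRep K) := by
  constructor
  · intro a
    show ‖((a : Matrix (Fin 2) (Fin 2) ℂ) 0 0) • (1 : K →L[ℂ] K)‖ ≤ ‖a‖
    rw [norm_smul]
    calc ‖(a : Matrix (Fin 2) (Fin 2) ℂ) 0 0‖ * ‖(1 : K →L[ℂ] K)‖
        ≤ ‖(a : Matrix (Fin 2) (Fin 2) ℂ) 0 0‖ * 1 := by
          gcongr
          exact ContinuousLinearMap.norm_id_le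
      _ = ‖(a : Matrix (Fin 2) (Fin 2) ℂ) 0 0‖ := mul_one _
      _ ≤ ‖a‖ := entry_norm_le' _ 0 0
  · have h : {x : K | ∃ (a : ↥T2) (y : K), scalRep K a y = x} = Set.univ := by
      apply Set.eq_univ_of_forall
      intro y
      refine ⟨1, y, ?_⟩
      rw [scalRep_apply, T2_one_coe, Matrix.one_apply_eq, one_smul]
    rw [h, Submodule.span_univ, Submodule.top_coe]
    exact dense_univ
end Test2
section Test3
variable {H₁ H₂ : Type} [NormedAddCommGroup H₁] [InnerProductSpace ℂ H₁]
  [NormedAddCommGroup H₂] [InnerProductSpace ℂ H₂]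

/-- first coordinate projection as a CLM -/
def pr1L : WithLp 2 (H₁ × H₂) →L[ℂ] H₁ :=
  (ContinuousLinearMap.fst ℂ H₁ H₂).comp
    (WithLp.prodContinuousLinearEquiv 2 ℂ H₁ H₂).toContinuousLinearMap

def pr2L : WithLp 2 (H₁ × H₂) →L[ℂ] H₂ :=
  (ContinuousLinearMap.snd ℂ H₁ H₂).comp
    (WithLp.prodContinuousLinearEquiv 2 ℂ H₁ H₂).toContinuousLinearMap

def in1L : H₁ →L[ℂ] WithLp 2 (H₁ × H₂) :=
  (WithLp.prodContinuousLinearEquiv 2 ℂ H₁ H₂).symm.toContinuousLinearMap.comp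
    (ContinuousLinearMap.inl ℂ H₁ H₂)

theorem pr1L_apply (x : WithLp 2 (H₁ × H₂)) : pr1L x = pj1 x := rfl
theorem pr2L_apply (x : WithLp 2 (H₁ × H₂)) : pr2L x = pj2 x := rfl
theorem in1L_apply (a : H₁) : in1L a = mk2 a (0:H₂) := rfl

theorem dir1 [CompleteSpace H₁] [CompleteSpace H₂] [Nontrivial H₁] [Nontrivial H₂]
    (T : H₂ →L[ℂ] H₁) (hsub : IsSubTracing ↥T2 (triRep T))
    (hdense : Dense (Set.range ⇑T : Set H₁)) : False := by
  classical
  set q2 : WithLp 2 (H₁ × H₂) →L[ℂ] H₂ := pr2L with hq2def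
  set E : Submodule ℂ (WithLp 2 (H₁ × H₂)) := LinearMap.ker (q2 : WithLp 2 (H₁ × H₂) →ₗ[ℂ] H₂) with hEdef
  have hEc : IsClosed (E : Set (WithLp 2 (H₁ × H₂))) := ContinuousLinearMap.isClosed_ker q2
  have hmem : ∀ x : WithLp 2 (H₁ × H₂), x ∈ E ↔ pj2 x = 0 := fun x => Iff.rfl
  have hinv : ∀ a : ↥T2, ∀ x ∈ E, triRep T a x ∈ E := by
    intro a x hx
    rw [hmem] at hx ⊢
    rw [show x = mk2 (pj1 x) (pj2 x) from rfl, triRep_mk2]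
    show ((a : Matrix (Fin 2) (Fin 2) ℂ) 1 1) • pj2 x = 0
    rw [hx, smul_zero]
  haveI : CompleteSpace ↥E := hEc.completeSpace_coe
  set R : ↥E →L[ℂ] ↥E := ContinuousLinearMap.id ℂ ↥E with hRdef
  have hRmod : ∀ (a : ↥T2) (x : ↥E),
      R ⟨triRep T a ↑x, hinv a ↑x x.2⟩ = scalRep ↥E a (R x) := by
    intro a x
    apply Subtype.ext
    obtain ⟨y, hy⟩ := x
    show triRep T a y = ((a : Matrix (Fin 2) (Fin 2) ℂ) 0 0) • y
    have hy2 : pj2 y = 0 := hy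
    have h1 : triRep T a y = mk2 ((a : Matrix (Fin 2) (Fin 2) ℂ) 0 0 • pj1 y
        + (a : Matrix (Fin 2) (Fin 2) ℂ) 0 1 • T (pj2 y))
        ((a : Matrix (Fin 2) (Fin 2) ℂ) 1 1 • pj2 y) := triRep_mk2 T a (pj1 y) (pj2 y)
    have h2 : ((a : Matrix (Fin 2) (Fin 2) ℂ) 0 0) • y
        = mk2 ((a : Matrix (Fin 2) (Fin 2) ℂ) 0 0 • pj1 y)
          ((a : Matrix (Fin 2) (Fin 2) ℂ) 0 0 • pj2 y) := mk2_smul _ _ _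
    rw [h1, h2, hy2, map_zero, smul_zero, smul_zero, smul_zero, add_zero]
  have hRne : R ≠ 0 := by
    obtain ⟨ζ, hζ⟩ := exists_ne (0 : H₁)
    intro h
    apply hζ
    have hmem0 : mk2 ζ (0:H₂) ∈ E := by rw [hmem]; rfl
    have h1 : R ⟨mk2 ζ 0, hmem0⟩ = 0 := by rw [h]; rfl
    have h2 : (⟨mk2 ζ 0, hmem0⟩ : ↥E) = 0 := h1
    have h3 : mk2 ζ (0:H₂) = 0 := congrArg Subtype.val h2
    exact congrArg pj1 h3
  obtain ⟨V, hV, hVne⟩ := hsub E hEc hinv ↥E (scalRep ↥E)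
    (scalRep_isHilbertRep ↥E) R hRmod hRne
  have hVz2 : ∀ η : H₂, V (mk2 (0:H₁) η) = 0 := by
    intro η
    have h1 := hV m22 (mk2 (0:H₁) η)
    rw [triRep_m22] at h1
    set v : WithLp 2 (H₁ × H₂) := ↑(V (mk2 (0:H₁) η)) with hv
    have hv2 : pj2 v = 0 := (V (mk2 (0:H₁) η)).2
    apply Subtype.ext
    show v = 0
    rw [h1, show v = mk2 (pj1 v) (pj2 v) from rfl, triRep_m22, hv2]
    rfl
  have hVzT : ∀ η : H₂, V (mk2 (T η) 0) = 0 := by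
    intro η
    have h1 := hV m12 (mk2 (0:H₁) η)
    rw [triRep_m12] at h1
    set v : WithLp 2 (H₁ × H₂) := ↑(V (mk2 (0:H₁) η)) with hv
    have hv2 : pj2 v = 0 := (V (mk2 (0:H₁) η)).2
    apply Subtype.ext
    show (↑(V (mk2 (T η) 0)) : WithLp 2 (H₁ × H₂)) = 0
    rw [h1, show v = mk2 (pj1 v) (pj2 v) from rfl, triRep_m12, hv2]
    show mk2 (T 0) (0:H₂) = 0
    rw [map_zero]
    rfl
  have hV1 : ∀ ζ : H₁, V (mk2 ζ 0) = 0 := by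
    set g : H₁ →L[ℂ] ↥E := V.comp in1L with hgdef
    have hg : Set.EqOn (⇑g) (fun _ => (0 : ↥E)) (Set.range ⇑T) := by
      rintro _ ⟨η, rfl⟩
      exact hVzT η
    have hgz := Continuous.ext_on hdense g.continuous continuous_const hg
    intro ζ
    have := congrFun hgz ζ
    exact this
  have hVzero : V = 0 := by
    ext x
    have hx : x = mk2 (pj1 x) (pj2 x) := rfl
    have hsplit : x = mk2 (pj1 x) 0 + mk2 (0:H₁) (pj2 x) := by
      rw [mk2_add, add_zero, zero_add]
      exact hx
    rw [hsplit, map_add, hV1, hVz2, add_zero]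
    rfl
  apply hVne
  rw [hVzero, ContinuousLinearMap.comp_zero]
end Test3
section Test4
variable {H₁ H₂ : Type} [NormedAddCommGroup H₁] [InnerProductSpace ℂ H₁]
  [NormedAddCommGroup H₂] [InnerProductSpace ℂ H₂]

theorem pj1_triRep (T : H₂ →L[ℂ] H₁) (a : ↥T2) (x : WithLp 2 (H₁ × H₂)) :
    pj1 (triRep T a x) = (a : Matrix (Fin 2) (Fin 2) ℂ) 0 0 • pj1 x
      + (a : Matrix (Fin 2) (Fin 2) ℂ) 0 1 • T (pj2 x) := rfl

theorem pj2_triRep (T : H₂ →L[ℂ] H₁) (a : ↥T2) (x : WithLp 2 (H₁ × H₂)) :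
    pj2 (triRep T a x) = (a : Matrix (Fin 2) (Fin 2) ℂ) 1 1 • pj2 x := rfl

theorem mk2_congr {a a' : H₁} {b b' : H₂} (h1 : a = a') (h2 : b = b') :
    mk2 a b = mk2 a' b' := by rw [h1, h2]

theorem dir2 [CompleteSpace H₁] [CompleteSpace H₂]
    (T : H₂ →L[ℂ] H₁) (hnd : ¬Dense (Set.range ⇑T : Set H₁)) :
    IsSubTracing ↥T2 (triRep T) := by
  classical
  -- find a unit vector orthogonal to the range of T
  set S : Submodule ℂ H₁ := (LinearMap.range (T : H₂ →ₗ[ℂ] H₁)).topologicalClosure with hSdef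
  have hSne : S ≠ ⊤ := by
    intro h
    apply hnd
    have : (S : Set H₁) = closure (Set.range ⇑T) := by
      rw [hSdef, Submodule.topologicalClosure_coe, LinearMap.coe_range, ContinuousLinearMap.coe_coe]
    rw [dense_iff_closure_eq, ← this, h, Submodule.top_coe]
  haveI : CompleteSpace ↥S :=
    (LinearMap.range (T : H₂ →ₗ[ℂ] H₁)).isClosed_topologicalClosure.completeSpace_coe
  have hbot : Sᗮ ≠ ⊥ := by
    intro h
    exact hSne (Submodule.orthogonal_eq_bot_iff.mp h)
  obtain ⟨ξ, hξS, hξne⟩ := Submodule.ne_bot_iff _ |>.mp hbot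
  have hξorth : ∀ η : H₂, ⟪ξ, T η⟫ = 0 := by
    intro η
    have hTS : T η ∈ S := Submodule.le_topologicalClosure _ (LinearMap.mem_range_self (T : H₂ →ₗ[ℂ] H₁) η)
    exact inner_eq_zero_symm.mpr ((Submodule.mem_orthogonal _ _).mp hξS _ hTS)
  intro E hEc hinv L _ _ _ πL hπL R hRmod hRne
  have hex : (∃ e₁ : H₁, ∃ h : mk2 e₁ (0:H₂) ∈ E, R ⟨mk2 e₁ 0, h⟩ ≠ 0) ∨
      (∃ e₂ : H₂, ∃ h : mk2 (0:H₁) e₂ ∈ E, R ⟨mk2 0 e₂, h⟩ ≠ 0) := by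
    by_contra hcon
    push_neg at hcon
    obtain ⟨hA, hB⟩ := hcon
    apply hRne
    ext x
    obtain ⟨y, hy⟩ := x
    have h1m : mk2 (pj1 y) (0:H₂) ∈ E := by
      have h := hinv m11 y hy
      rwa [show y = mk2 (pj1 y) (pj2 y) from rfl, triRep_m11] at h
    have h2m : mk2 (0:H₁) (pj2 y) ∈ E := by
      have h := hinv m22 y hy
      rwa [show y = mk2 (pj1 y) (pj2 y) from rfl, triRep_m22] at h
    have hsplit : (⟨y, hy⟩ : ↥E) = ⟨mk2 (pj1 y) 0, h1m⟩ + ⟨mk2 0 (pj2 y), h2m⟩ := by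
      apply Subtype.ext
      show y = mk2 (pj1 y) (0:H₂) + mk2 (0:H₁) (pj2 y)
      rw [mk2_add, add_zero, zero_add]
      rfl
    rw [hsplit, map_add, hA _ h1m, hB _ h2m, add_zero]
    rfl
  rcases hex with ⟨e₁, hpm, hR1⟩ | ⟨e₂, hpm, hR2⟩
  · -- Case A : R is nonzero on the first summand; use ξ
    set V : WithLp 2 (H₁ × H₂) →L[ℂ] ↥E :=
      ContinuousLinearMap.smulRight ((innerSL ℂ ξ).comp pr1L)
        (⟨mk2 e₁ 0, hpm⟩ : ↥E) with hVdef
    have hVapp : ∀ y : WithLp 2 (H₁ × H₂),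
        ((V y : ↥E) : WithLp 2 (H₁ × H₂)) = (⟪ξ, pj1 y⟫) • mk2 e₁ (0:H₂) := fun y => rfl
    have hVapp' : ∀ y : WithLp 2 (H₁ × H₂),
        V y = (⟪ξ, pj1 y⟫) • (⟨mk2 e₁ 0, hpm⟩ : ↥E) := fun y => rfl
    refine ⟨V, ?_, ?_⟩
    · intro a x
      rw [hVapp, hVapp, pj1_triRep, inner_add_right, inner_smul_right, inner_smul_right,
        hξorth, mul_zero, add_zero, map_smul]
      have h0 : triRep T a (mk2 e₁ (0:H₂))
          = mk2 ((a : Matrix (Fin 2) (Fin 2) ℂ) 0 0 • e₁) (0:H₂) := by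
        rw [triRep_mk2, map_zero, smul_zero, add_zero, smul_zero]
      rw [h0, mk2_smul, mk2_smul, smul_zero, smul_zero, smul_smul, mul_comm]
    · intro h0
      have h1 : R (V (mk2 ξ (0:H₂))) = 0 := by
        rw [← ContinuousLinearMap.comp_apply, h0]; rfl
      rw [hVapp', pj1_mk2, map_smul] at h1
      rcases smul_eq_zero.mp h1 with h | h
      · exact inner_self_ne_zero.mpr hξne h
      · exact hR1 h
  · -- Case B : R is nonzero on the second summand
    have he₂ : e₂ ≠ 0 := by
      intro h
      apply hR2
      subst h
      rw [show (⟨mk2 (0:H₁) (0:H₂), hpm⟩ : ↥E) = 0 from Subtype.ext rfl, map_zero]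
    by_cases hTe : T e₂ = 0
    · -- Case B1 : T e₂ = 0
      set V : WithLp 2 (H₁ × H₂) →L[ℂ] ↥E :=
        ContinuousLinearMap.smulRight ((innerSL ℂ e₂).comp pr2L)
          (⟨mk2 0 e₂, hpm⟩ : ↥E) with hVdef
      have hVapp : ∀ y : WithLp 2 (H₁ × H₂),
          ((V y : ↥E) : WithLp 2 (H₁ × H₂)) = (⟪e₂, pj2 y⟫) • mk2 (0:H₁) e₂ := fun y => rfl
      have hVapp' : ∀ y : WithLp 2 (H₁ × H₂),
          V y = (⟪e₂, pj2 y⟫) • (⟨mk2 0 e₂, hpm⟩ : ↥E) := fun y => rfl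
      refine ⟨V, ?_, ?_⟩
      · intro a x
        rw [hVapp, hVapp, pj2_triRep, inner_smul_right, map_smul]
        have h0 : triRep T a (mk2 (0:H₁) e₂)
            = mk2 (0:H₁) ((a : Matrix (Fin 2) (Fin 2) ℂ) 1 1 • e₂) := by
          rw [triRep_mk2, hTe, smul_zero, smul_zero, add_zero]
        rw [h0, mk2_smul, mk2_smul, smul_zero, smul_zero, smul_smul, mul_comm]
      · intro h0
        have h1 : R (V (mk2 (0:H₁) e₂)) = 0 := by
          rw [← ContinuousLinearMap.comp_apply, h0]; rfl
        rw [hVapp', pj2_mk2, map_smul] at h1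
        rcases smul_eq_zero.mp h1 with h | h
        · exact inner_self_ne_zero.mpr he₂ h
        · exact hR2 h
    · -- Case B2 : T e₂ ≠ 0
      have hqm : mk2 (T e₂) (0:H₂) ∈ E := by
        have h := hinv m12 (mk2 (0:H₁) e₂) hpm
        rwa [triRep_m12] at h
      set V : WithLp 2 (H₁ × H₂) →L[ℂ] ↥E :=
        ContinuousLinearMap.smulRight ((innerSL ℂ (T e₂)).comp pr1L)
          (⟨mk2 (T e₂) 0, hqm⟩ : ↥E)
        + ContinuousLinearMap.smulRight ((innerSL ℂ (T e₂)).comp (T.comp pr2L))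
          (⟨mk2 0 e₂, hpm⟩ : ↥E) with hVdef
      have hVapp : ∀ y : WithLp 2 (H₁ × H₂),
          ((V y : ↥E) : WithLp 2 (H₁ × H₂))
            = mk2 ((⟪T e₂, pj1 y⟫) • T e₂) ((⟪T e₂, T (pj2 y)⟫) • e₂) := by
        intro y
        show (⟪T e₂, pj1 y⟫) • mk2 (T e₂) (0:H₂) + (⟪T e₂, T (pj2 y)⟫) • mk2 (0:H₁) e₂ = _
        rw [mk2_smul, mk2_smul, mk2_add, smul_zero, smul_zero, add_zero, zero_add]
      refine ⟨V, ?_, ?_⟩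
      · intro a x
        rw [hVapp, hVapp, pj1_triRep, pj2_triRep, triRep_mk2]
        refine mk2_congr ?_ ?_
        · simp only [map_smul, inner_add_right, inner_smul_right, add_smul, smul_smul]
        · simp only [map_smul, inner_smul_right, smul_smul]
      · intro h0
        have h1 : R (V (mk2 (0:H₁) e₂)) = 0 := by
          rw [← ContinuousLinearMap.comp_apply, h0]; rfl
        have h2 : V (mk2 (0:H₁) e₂) = (⟪T e₂, T e₂⟫) • (⟨mk2 0 e₂, hpm⟩ : ↥E) := by
          apply Subtype.ext
          rw [hVapp]
          show mk2 ((⟪T e₂, pj1 (mk2 (0:H₁) e₂)⟫) • T e₂)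
              ((⟪T e₂, T (pj2 (mk2 (0:H₁) e₂))⟫) • e₂)
            = (⟪T e₂, T e₂⟫) • mk2 (0:H₁) e₂
          rw [pj1_mk2, pj2_mk2, inner_zero_right, zero_smul, mk2_smul]
          exact mk2_congr (smul_zero _).symm rfl
        rw [h2, map_smul] at h1
        rcases smul_eq_zero.mp h1 with h | h
        · exact inner_self_ne_zero.mpr hTe h
        · exact hR2 h
end Test4

/-- The Hilbert `T2`-module `H₁ ⊕ H₂` given by `π_(H₁,H₂,T)` is sub-tracing if and only if the range of `T` is not dense in `H₁`. -/
theorem triRep_subtracing_iff [CompleteSpace H₁] [CompleteSpace H₂]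
    [Nontrivial H₁] [Nontrivial H₂]
    (T : H₂ →L[ℂ] H₁) (hT : ‖T‖ ≤ 1) :
    IsSubTracing ↥T2 (triRep T) ↔ ¬Dense (Set.range ⇑T : Set H₁) := by
  constructor
  · intro hsub hdense
    exact (dir1 T hsub hdense).elim
  · exact fun hnd => dir2 T hnd
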